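/- Let X be a real seminormed vector space, f₁, …, f_N, g bounded linear functionals, and u₁, …, u_N, v ∈ ℝ such that the system f_k(x) ≤ u_k (k = 1, …, N) is consistent. Then {x : g x ≤ v} ⊇ ⋂_{k=1}^N {x : f_k x ≤ u_k} if and only if there exist α₁, …, α_N ≥ 0 with g = ∑_{k=1}^N α_k • f_k and ∑_{k=1}^N α_k u_k ≤ v. -/

import Mathlib

/-- Homogeneous Farkas lemma over an arbitrary real vector space, by induction
(Fourier–Motzkin style elimination of one constraint). -/
theorem farkas_hom (Y : Type*) [AddCommGroup Y] [Module ℝ Y] :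
    ∀ (M : ℕ) (F : Fin M → (Y →ₗ[ℝ] ℝ)) (G : Y →ₗ[ℝ] ℝ),
      (∀ y, (∀ i, F i y ≤ 0) → G y ≤ 0) →
      ∃ β : Fin M → ℝ, (∀ i, 0 ≤ β i) ∧ G = ∑ i, β i • F i := by
  intro M
  induction M with
  | zero =>
      intro F G h
      refine ⟨Fin.elim0, fun i => i.elim0, ?_⟩
      have hG : ∀ y, G y = 0 := by
        intro y
        have h1 := h y (fun i => i.elim0)
        have h2 := h (-y) (fun i => i.elim0)
        simp only [map_neg] at h2
        linarith
      ext y; simpa using hG y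
  | succ M ih =>
      intro F G h
      by_cases hc : ∀ y, (∀ i : Fin M, F i.castSucc y ≤ 0) → G y ≤ 0
      · obtain ⟨β, hβ, hG⟩ := ih (fun i => F i.castSucc) G hc
        refine ⟨Fin.snoc β 0, ?_, ?_⟩
        · intro i
          refine Fin.lastCases ?_ ?_ i <;> simp [hβ]
        · rw [Fin.sum_univ_castSucc]
          simpa using hG
      · push_neg at hc
        obtain ⟨z, hz, hGz⟩ := hc
        set FM := F (Fin.last M) with hFM
        have hFMz : 0 < FM z := by
          by_contra hle
          push_neg at hle
          have := h z (fun j => by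
            refine Fin.lastCases ?_ ?_ j
            · exact hle
            · exact hz)
          linarith
        have hFMz' : FM z ≠ 0 := ne_of_gt hFMz
        set F' : Fin M → (Y →ₗ[ℝ] ℝ) :=
          fun i => F i.castSucc - (F i.castSucc z / FM z) • FM with hF'
        set G' : Y →ₗ[ℝ] ℝ := G - (G z / FM z) • FM with hG'
        have hF'app : ∀ (i : Fin M) (y : Y),
            F' i y = F i.castSucc y - (F i.castSucc z / FM z) * FM y := by
          intro i y; simp [hF', smul_eq_mul]
        have hG'app : ∀ y : Y, G' y = G y - (G z / FM z) * FM y := by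
          intro y; simp [hG', smul_eq_mul]
        have key : ∀ y, (∀ i : Fin M, F' i y ≤ 0) → G' y ≤ 0 := by
          intro y hy
          set w := y - (FM y / FM z) • z with hw
          have hFMw : FM w = 0 := by
            simp only [hw, map_sub, map_smul, smul_eq_mul]
            field_simp
            ring
          have hFiw : ∀ i : Fin M, F i.castSucc w = F' i y := by
            intro i
            rw [hF'app i y]
            simp only [hw, map_sub, map_smul, smul_eq_mul]
            field_simp
          have hGw : G w ≤ 0 := by
            apply h w
            intro j
            refine Fin.lastCases ?_ ?_ j
            · rw [← hFM, hFMw]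
            · intro i; rw [hFiw i]; exact hy i
          have hG'y : G' y = G w := by
            rw [hG'app y]
            simp only [hw, map_sub, map_smul, smul_eq_mul]
            field_simp
          rw [hG'y]; exact hGw
        obtain ⟨γ, hγ, hGsum⟩ := ih F' G' key
        have hGsum' : ∀ y : Y, G' y = ∑ i, γ i * F' i y := by
          intro y
          rw [hGsum]
          simp [smul_eq_mul]
        set c : ℝ := (G z - ∑ i, γ i * F i.castSucc z) / FM z with hcdef
        have hcnonneg : 0 ≤ c := by
          apply div_nonneg _ (le_of_lt hFMz)
          have : ∑ i, γ i * F i.castSucc z ≤ 0 :=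
            Finset.sum_nonpos (fun i _ => mul_nonpos_of_nonneg_of_nonpos (hγ i) (hz i))
          linarith
        refine ⟨Fin.snoc γ c, ?_, ?_⟩
        · intro i
          refine Fin.lastCases ?_ ?_ i <;> simp [hγ, hcnonneg]
        · ext y
          rw [Fin.sum_univ_castSucc]
          simp only [LinearMap.add_apply, LinearMap.coe_sum, Finset.sum_apply,
            LinearMap.smul_apply, smul_eq_mul, Fin.snoc_castSucc, Fin.snoc_last]
          have h1 := hGsum' y
          rw [hG'app y] at h1
          have h2 : ∑ i, γ i * F' i y
              = (∑ i, γ i * F i.castSucc y) - (∑ i, γ i * F i.castSucc z) * (FM y / FM z) := by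
            have step : ∀ i : Fin M, γ i * F' i y
                = γ i * F i.castSucc y - γ i * F i.castSucc z * (FM y / FM z) := by
              intro i; rw [hF'app]; ring
            rw [Finset.sum_congr rfl (fun i _ => step i), Finset.sum_sub_distrib,
              ← Finset.sum_mul]
          rw [h2] at h1
          rw [hcdef]
          have hclear : FM z ≠ 0 := hFMz'
          field_simp at h1 ⊢
          linarith

theorem stmt8 (X : Type*) [SeminormedAddCommGroup X] [NormedSpace ℝ X]
    (N : ℕ) (f : Fin N → (X →L[ℝ] ℝ)) (g : X →L[ℝ] ℝ)
    (u : Fin N → ℝ) (v : ℝ)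
    (hcons : ∃ x : X, ∀ k, f k x ≤ u k) :
    (⋂ k, {x : X | f k x ≤ u k}) ⊆ {x : X | g x ≤ v} ↔
      ∃ α : Fin N → ℝ, (∀ k, 0 ≤ α k) ∧ g = ∑ k, α k • f k ∧
        ∑ k, α k * u k ≤ v := by
  constructor
  · intro hsub
    obtain ⟨xb, hxb⟩ := hcons
    -- homogenized functionals on X × ℝ
    set Fh : Fin (N + 1) → ((X × ℝ) →ₗ[ℝ] ℝ) :=
      Fin.snoc (fun k => ((f k : X →ₗ[ℝ] ℝ).comp (LinearMap.fst ℝ X ℝ))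
          - u k • LinearMap.snd ℝ X ℝ) (-(LinearMap.snd ℝ X ℝ)) with hFh
    set Gh : (X × ℝ) →ₗ[ℝ] ℝ :=
      ((g : X →ₗ[ℝ] ℝ).comp (LinearMap.fst ℝ X ℝ)) - v • LinearMap.snd ℝ X ℝ with hGh
    have hFapp : ∀ (k : Fin N) (p : X × ℝ), Fh k.castSucc p = f k p.1 - u k * p.2 := by
      intro k p; simp [hFh, Fin.snoc_castSucc, smul_eq_mul]
    have hFlast : ∀ p : X × ℝ, Fh (Fin.last N) p = -p.2 := by
      intro p; simp [hFh]
    have hGapp : ∀ p : X × ℝ, Gh p = g p.1 - v * p.2 := by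
      intro p; simp [hGh, smul_eq_mul]
    have hyp : ∀ p : X × ℝ, (∀ j, Fh j p ≤ 0) → Gh p ≤ 0 := by
      rintro ⟨x, t⟩ hall
      have ht : 0 ≤ t := by have := hall (Fin.last N); rw [hFlast] at this; linarith
      have hk : ∀ k, f k x ≤ u k * t := by
        intro k; have := hall k.castSucc; rw [hFapp] at this; linarith
      rw [hGapp]
      rcases eq_or_lt_of_le ht with ht0 | htpos
      · -- t = 0 : show g x ≤ 0
        have hk0 : ∀ k, f k x ≤ 0 := by intro k; have := hk k; rw [← ht0, mul_zero] at this; exact this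
        have hgx : g x ≤ 0 := by
          by_contra hpos
          push_neg at hpos
          obtain ⟨n, hn⟩ := exists_nat_gt ((v - g xb) / g x)
          have hmem : xb + (n : ℝ) • x ∈ ⋂ k, {x : X | f k x ≤ u k} := by
            simp only [Set.mem_iInter, Set.mem_setOf_eq]
            intro k
            have : ((n : ℝ)) * f k x ≤ 0 :=
              mul_nonpos_of_nonneg_of_nonpos (Nat.cast_nonneg n) (hk0 k)
            simp only [map_add, map_smul, smul_eq_mul]
            have := hxb k
            linarith
          have hle := hsub hmem
          simp only [Set.mem_setOf_eq, map_add, map_smul, smul_eq_mul] at hle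
          have : (v - g xb) / g x < n := hn
          rw [div_lt_iff₀ hpos] at this
          linarith
        simp only [← ht0, mul_zero]
        linarith
      · -- t > 0
        have hmem : t⁻¹ • x ∈ ⋂ k, {x : X | f k x ≤ u k} := by
          simp only [Set.mem_iInter, Set.mem_setOf_eq]
          intro k
          simp only [map_smul, smul_eq_mul]
          rw [inv_mul_le_iff₀ htpos]
          have := hk k; linarith [hk k, mul_comm (u k) t]
        have hle := hsub hmem
        simp only [Set.mem_setOf_eq, map_smul, smul_eq_mul] at hle
        rw [inv_mul_le_iff₀ htpos] at hle
        linarith [mul_comm v t]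
    obtain ⟨β, hβ, hGeq⟩ := farkas_hom (X × ℝ) (N + 1) Fh Gh hyp
    have hGeq' : ∀ p : X × ℝ, Gh p = ∑ k : Fin N, β k.castSucc * Fh k.castSucc p
        + β (Fin.last N) * Fh (Fin.last N) p := by
      intro p
      rw [hGeq]
      simp only [LinearMap.coe_sum, Finset.sum_apply, LinearMap.smul_apply, smul_eq_mul]
      rw [Fin.sum_univ_castSucc]
    refine ⟨fun k => β k.castSucc, fun k => hβ _, ?_, ?_⟩
    · ext x
      have := hGeq' (x, 0)
      rw [hGapp] at this
      simp only [hFapp, hFlast] at this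
      simp only [mul_zero, sub_zero, neg_zero] at this
      simpa [ContinuousLinearMap.sum_apply, ContinuousLinearMap.smul_apply,
        smul_eq_mul] using this
    · have := hGeq' (0, 1)
      rw [hGapp] at this
      simp only [hFapp, hFlast, map_zero] at this
      simp only [mul_one, zero_sub] at this
      have hβlast := hβ (Fin.last N)
      have hsum : ∑ k : Fin N, β k.castSucc * -u k = -∑ k : Fin N, β k.castSucc * u k := by
        rw [← Finset.sum_neg_distrib]; exact Finset.sum_congr rfl (fun k _ => by ring)
      rw [hsum] at this
      linarith
  · rintro ⟨α, hα, hg, hsum⟩ x hx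
    simp only [Set.mem_iInter, Set.mem_setOf_eq] at hx
    simp only [Set.mem_setOf_eq, hg, ContinuousLinearMap.sum_apply,
      ContinuousLinearMap.smul_apply, smul_eq_mul]
    calc ∑ k, α k * f k x ≤ ∑ k, α k * u k :=
          Finset.sum_le_sum (fun k _ => mul_le_mul_of_nonneg_left (hx k) (hα k))
      _ ≤ v := hsum
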